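/- Let H(s) = ∫_s^∞ h(t−1) dt and κ = 0.9214. Then H(s) ≤ κ·s·h(s) for all s ≥ 3, and H(3) ≤ κ·s·h(s) for all 1 ≤ s ≤ 3. -/

import Mathlib

open Real

/-- The function `h(s)`: `e⁻²` for `1 ≤ s ≤ 2`, `e⁻ˢ` for `2 ≤ s ≤ 3`,
and `3 s⁻¹ e⁻ˢ` for `s ≥ 3`. -/
noncomputable def hfun (s : ℝ) : ℝ :=
  if s ≤ 2 then Real.exp (-2) else if s ≤ 3 then Real.exp (-s) else 3 / s * Real.exp (-s)

/-- `H(s) = ∫_s^∞ h(t-1) dt`. -/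
noncomputable def Hfun (s : ℝ) : ℝ := ∫ t in Set.Ioi s, hfun (t - 1)

/-- A polynomial upper bound for `1/u` on `[3, ∞)`. -/
noncomputable def Pfun (u : ℝ) : ℝ :=
  ((67 : ℝ)/42) + ((-27611 : ℝ)/25200) * u^1 + ((393319 : ℝ)/926100) * u^2 +
  ((-88390541 : ℝ)/864360000) * u^3 + ((19174537 : ℝ)/1210104000) * u^4 +
  ((-12537439 : ℝ)/7941307500) * u^5 + ((129029 : ℝ)/1323551250) * u^6 +
  ((-64 : ℝ)/18907875) * u^7 + ((4 : ℝ)/79413075) * u^8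

/-- Antiderivative polynomial: `-exp(1-t) * Rfun t` has derivative
`exp (1-t) * (3 * Pfun (t-1))`. -/
noncomputable def Rfun (t : ℝ) : ℝ :=
  ((5389835751 : ℝ)/941192000) + ((-3745572429 : ℝ)/941192000) * t^1 +
  ((140785899 : ℝ)/94119200) * t^2 + ((-1624848223 : ℝ)/4705960000) * t^3 +
  ((48290101 : ℝ)/941192000) * t^4 + ((-1450791 : ℝ)/294122500) * t^5 +
  ((392687 : ℝ)/1323551250) * t^6 + ((-64 : ℝ)/6302625) * t^7 +
  ((4 : ℝ)/26471025) * t^8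

lemma Pfun_key {u : ℝ} (hu : 3 ≤ u) : 1 ≤ u * Pfun u := by
  have h : u * Pfun u - 1 =
      (4/79413075 : ℝ) * ((u-3) * ((u-15/4)*(u-28/5)*(u-35/4)*(u-14))^2) := by
    unfold Pfun; ring
  have hn : (0:ℝ) ≤ (u-3) * ((u-15/4)*(u-28/5)*(u-35/4)*(u-14))^2 :=
    mul_nonneg (by linarith) (sq_nonneg _)
  linarith

lemma Pfun_pos {u : ℝ} (hu : 3 ≤ u) : 0 < Pfun u := by
  have h := Pfun_key hu
  nlinarith

lemma hfun_nonneg (s : ℝ) : 0 ≤ hfun s := by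
  unfold hfun
  split_ifs with h1 h2
  · positivity
  · positivity
  · push_neg at h1 h2
    have : (0:ℝ) < s := by linarith
    positivity

lemma hfun_measurable : Measurable hfun := by
  unfold hfun
  apply Measurable.ite (measurableSet_le measurable_id measurable_const) measurable_const
  apply Measurable.ite (measurableSet_le measurable_id measurable_const)
  · exact Real.measurable_exp.comp measurable_neg
  · exact (measurable_const.div measurable_id).mul
      (Real.measurable_exp.comp measurable_neg)

lemma hfun_le {t : ℝ} (ht : 3 ≤ t) : hfun (t - 1) ≤ Real.exp (1 - t) := by
  unfold hfun
  split_ifs with h1 h2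
  · exact Real.exp_le_exp.mpr (by linarith)
  · apply le_of_eq; ring_nf
  · push_neg at h2
    have h3 : (3:ℝ) < t - 1 := h2
    have hle : 3 / (t - 1) ≤ 1 := by
      rw [div_le_one (by linarith)]; linarith
    have hexp : Real.exp (-(t-1)) = Real.exp (1 - t) := by ring_nf
    calc 3 / (t-1) * Real.exp (-(t-1)) ≤ 1 * Real.exp (-(t-1)) :=
          mul_le_mul_of_nonneg_right hle (Real.exp_pos _).le
      _ = Real.exp (1 - t) := by rw [one_mul, hexp]

lemma hfun_le' {t : ℝ} (ht : 4 < t) : hfun (t - 1) ≤ Real.exp (1 - t) * (3 * Pfun (t - 1)) := by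
  have h3 : (3:ℝ) < t - 1 := by linarith
  have hpos : (0:ℝ) < t - 1 := by linarith
  unfold hfun
  rw [if_neg (by linarith), if_neg (by linarith)]
  have hkey := Pfun_key (le_of_lt h3)
  have hdiv : 3 / (t - 1) ≤ 3 * Pfun (t - 1) := by
    rw [div_le_iff₀ hpos]; nlinarith
  have hexp : Real.exp (-(t-1)) = Real.exp (1 - t) := by ring_nf
  calc 3 / (t-1) * Real.exp (-(t-1)) ≤ 3 * Pfun (t-1) * Real.exp (-(t-1)) :=
        mul_le_mul_of_nonneg_right hdiv (Real.exp_pos _).le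
    _ = Real.exp (1 - t) * (3 * Pfun (t-1)) := by rw [hexp]; ring

lemma exp_one_sub_integrableOn (s : ℝ) :
    MeasureTheory.IntegrableOn (fun t : ℝ => Real.exp (1 - t)) (Set.Ioi s) := by
  have h : MeasureTheory.IntegrableOn (fun t : ℝ => Real.exp (-1 * t)) (Set.Ioi s) :=
    exp_neg_integrableOn_Ioi s one_pos
  have h2 : MeasureTheory.IntegrableOn (fun t : ℝ => Real.exp 1 * Real.exp (-1 * t))
      (Set.Ioi s) := h.const_mul (Real.exp 1)
  apply h2.congr_fun _ measurableSet_Ioi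
  intro t _
  simp only [← Real.exp_add]
  ring_nf

lemma hfun_integrableOn {s : ℝ} (hs : 3 ≤ s) :
    MeasureTheory.IntegrableOn (fun t : ℝ => hfun (t - 1)) (Set.Ioi s) := by
  have hm : Measurable fun t : ℝ => hfun (t - 1) :=
    hfun_measurable.comp (measurable_id.sub measurable_const)
  apply MeasureTheory.Integrable.mono (exp_one_sub_integrableOn s)
    hm.aestronglyMeasurable
  filter_upwards [MeasureTheory.ae_restrict_mem measurableSet_Ioi] with t ht
  rw [Real.norm_eq_abs, Real.norm_eq_abs, abs_of_nonneg (hfun_nonneg _),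
    abs_of_nonneg (Real.exp_pos _).le]
  exact hfun_le (by simp only [Set.mem_Ioi] at ht; linarith)

lemma integral_exp_one_sub_Ioi (s : ℝ) :
    ∫ t in Set.Ioi s, Real.exp (1 - t) = Real.exp (1 - s) := by
  have h : ∀ t : ℝ, Real.exp (1 - t) = Real.exp 1 * Real.exp (-t) := by
    intro t; rw [← Real.exp_add]; ring_nf
  simp_rw [h]
  rw [MeasureTheory.integral_const_mul, integral_exp_neg_Ioi, ← Real.exp_add]

lemma Hfun_le {s : ℝ} (hs : 3 ≤ s) : Hfun s ≤ Real.exp (1 - s) := by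
  rw [Hfun, ← integral_exp_one_sub_Ioi s]
  apply MeasureTheory.setIntegral_mono_on (hfun_integrableOn hs)
    (exp_one_sub_integrableOn s) measurableSet_Ioi
  intro t ht
  exact hfun_le (le_of_lt (lt_of_le_of_lt hs ht))

lemma hasDerivAt_G (t : ℝ) :
    HasDerivAt (fun x : ℝ => -(Real.exp (1 - x) * Rfun x))
      (Real.exp (1 - t) * (3 * Pfun (t - 1))) t := by
  have hexp : HasDerivAt (fun x : ℝ => Real.exp (1 - x)) (-Real.exp (1 - t)) t := by
    simpa using (((hasDerivAt_id t).const_sub (1:ℝ)).exp)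
  have hR : HasDerivAt Rfun
      (((-3745572429 : ℝ)/941192000) * (↑(1:ℕ) * t^(1-1)) +
       ((140785899 : ℝ)/94119200) * (↑(2:ℕ) * t^(2-1)) +
       ((-1624848223 : ℝ)/4705960000) * (↑(3:ℕ) * t^(3-1)) +
       ((48290101 : ℝ)/941192000) * (↑(4:ℕ) * t^(4-1)) +
       ((-1450791 : ℝ)/294122500) * (↑(5:ℕ) * t^(5-1)) +
       ((392687 : ℝ)/1323551250) * (↑(6:ℕ) * t^(6-1)) +
       ((-64 : ℝ)/6302625) * (↑(7:ℕ) * t^(7-1)) +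
       ((4 : ℝ)/26471025) * (↑(8:ℕ) * t^(8-1))) t := by
    unfold Rfun
    have h := ((((((((hasDerivAt_const t ((5389835751 : ℝ)/941192000)).fun_add
      ((hasDerivAt_pow 1 t).const_mul ((-3745572429 : ℝ)/941192000))).fun_add
      ((hasDerivAt_pow 2 t).const_mul ((140785899 : ℝ)/94119200))).fun_add
      ((hasDerivAt_pow 3 t).const_mul ((-1624848223 : ℝ)/4705960000))).fun_add
      ((hasDerivAt_pow 4 t).const_mul ((48290101 : ℝ)/941192000))).fun_add
      ((hasDerivAt_pow 5 t).const_mul ((-1450791 : ℝ)/294122500))).fun_add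
      ((hasDerivAt_pow 6 t).const_mul ((392687 : ℝ)/1323551250))).fun_add
      ((hasDerivAt_pow 7 t).const_mul ((-64 : ℝ)/6302625))).fun_add
      ((hasDerivAt_pow 8 t).const_mul ((4 : ℝ)/26471025))
    refine h.congr_deriv ?_
    ring
  have h := (hexp.fun_mul hR).fun_neg
  refine h.congr_deriv ?_
  unfold Pfun Rfun
  push_cast
  ring

lemma tendsto_G : Filter.Tendsto (fun x : ℝ => -(Real.exp (1 - x) * Rfun x))
    Filter.atTop (nhds 0) := by
  have base : ∀ n : ℕ, Filter.Tendsto (fun x : ℝ => x ^ n * Real.exp (-x))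
      Filter.atTop (nhds 0) := tendsto_pow_mul_exp_neg_atTop_nhds_zero
  have hsum : Filter.Tendsto (fun x : ℝ =>
      ((5389835751 : ℝ)/941192000) * (x^0 * Real.exp (-x)) +
      ((-3745572429 : ℝ)/941192000) * (x^1 * Real.exp (-x)) +
      ((140785899 : ℝ)/94119200) * (x^2 * Real.exp (-x)) +
      ((-1624848223 : ℝ)/4705960000) * (x^3 * Real.exp (-x)) +
      ((48290101 : ℝ)/941192000) * (x^4 * Real.exp (-x)) +
      ((-1450791 : ℝ)/294122500) * (x^5 * Real.exp (-x)) +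
      ((392687 : ℝ)/1323551250) * (x^6 * Real.exp (-x)) +
      ((-64 : ℝ)/6302625) * (x^7 * Real.exp (-x)) +
      ((4 : ℝ)/26471025) * (x^8 * Real.exp (-x)))
      Filter.atTop (nhds 0) := by
    have h := ((((((((((base 0).const_mul ((5389835751 : ℝ)/941192000)).add
      ((base 1).const_mul ((-3745572429 : ℝ)/941192000))).add
      ((base 2).const_mul ((140785899 : ℝ)/94119200))).add
      ((base 3).const_mul ((-1624848223 : ℝ)/4705960000))).add
      ((base 4).const_mul ((48290101 : ℝ)/941192000))).add
      ((base 5).const_mul ((-1450791 : ℝ)/294122500))).add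
      ((base 6).const_mul ((392687 : ℝ)/1323551250))).add
      ((base 7).const_mul ((-64 : ℝ)/6302625))).add
      ((base 8).const_mul ((4 : ℝ)/26471025)))
    simpa using h
  have h2 : Filter.Tendsto (fun x : ℝ =>
      -(Real.exp 1 * (((5389835751 : ℝ)/941192000) * (x^0 * Real.exp (-x)) +
      ((-3745572429 : ℝ)/941192000) * (x^1 * Real.exp (-x)) +
      ((140785899 : ℝ)/94119200) * (x^2 * Real.exp (-x)) +
      ((-1624848223 : ℝ)/4705960000) * (x^3 * Real.exp (-x)) +
      ((48290101 : ℝ)/941192000) * (x^4 * Real.exp (-x)) +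
      ((-1450791 : ℝ)/294122500) * (x^5 * Real.exp (-x)) +
      ((392687 : ℝ)/1323551250) * (x^6 * Real.exp (-x)) +
      ((-64 : ℝ)/6302625) * (x^7 * Real.exp (-x)) +
      ((4 : ℝ)/26471025) * (x^8 * Real.exp (-x)))))
      Filter.atTop (nhds 0) := by
    simpa using (hsum.const_mul (Real.exp 1)).neg
  have heq : (fun x : ℝ => -(Real.exp (1 - x) * Rfun x)) = fun x : ℝ =>
      -(Real.exp 1 * (((5389835751 : ℝ)/941192000) * (x^0 * Real.exp (-x)) +
      ((-3745572429 : ℝ)/941192000) * (x^1 * Real.exp (-x)) +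
      ((140785899 : ℝ)/94119200) * (x^2 * Real.exp (-x)) +
      ((-1624848223 : ℝ)/4705960000) * (x^3 * Real.exp (-x)) +
      ((48290101 : ℝ)/941192000) * (x^4 * Real.exp (-x)) +
      ((-1450791 : ℝ)/294122500) * (x^5 * Real.exp (-x)) +
      ((392687 : ℝ)/1323551250) * (x^6 * Real.exp (-x)) +
      ((-64 : ℝ)/6302625) * (x^7 * Real.exp (-x)) +
      ((4 : ℝ)/26471025) * (x^8 * Real.exp (-x)))) := by
    funext x
    rw [show (1:ℝ) - x = 1 + -x by ring, Real.exp_add]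
    unfold Rfun
    ring
  rw [heq]
  exact h2

lemma Gderiv_nonneg {x : ℝ} (hx : x ∈ Set.Ioi (4:ℝ)) :
    0 ≤ Real.exp (1 - x) * (3 * Pfun (x - 1)) := by
  simp only [Set.mem_Ioi] at hx
  have := Pfun_pos (u := x - 1) (by linarith)
  positivity

lemma g_integrableOn :
    MeasureTheory.IntegrableOn (fun t : ℝ => Real.exp (1 - t) * (3 * Pfun (t - 1)))
      (Set.Ioi (4:ℝ)) :=
  MeasureTheory.integrableOn_Ioi_deriv_of_nonneg' (fun x _ => hasDerivAt_G x)
    (fun x hx => Gderiv_nonneg hx) tendsto_G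

lemma integral_g :
    ∫ t in Set.Ioi (4:ℝ), Real.exp (1 - t) * (3 * Pfun (t - 1)) =
      Real.exp (-3) * Rfun 4 := by
  rw [MeasureTheory.integral_Ioi_of_hasDerivAt_of_nonneg' (fun x _ => hasDerivAt_G x)
    (fun x hx => Gderiv_nonneg hx) tendsto_G]
  norm_num

lemma integral_exp_Ioc :
    ∫ t in Set.Ioc (3:ℝ) 4, Real.exp (1 - t) = Real.exp (-2) - Real.exp (-3) := by
  rw [← intervalIntegral.integral_of_le (by norm_num : (3:ℝ) ≤ 4)]
  have hderiv : ∀ x ∈ Set.uIcc (3:ℝ) 4,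
      HasDerivAt (fun x : ℝ => -Real.exp (1 - x)) (Real.exp (1 - x)) x := by
    intro x _
    simpa using (((hasDerivAt_id x).const_sub (1:ℝ)).exp).fun_neg
  rw [intervalIntegral.integral_eq_sub_of_hasDerivAt hderiv
    ((by fun_prop : Continuous fun x : ℝ => Real.exp (1 - x)).intervalIntegrable 3 4)]
  norm_num
  ring

lemma Hfun3_le : Hfun 3 ≤ Real.exp (-2) - Real.exp (-3) + Real.exp (-3) * Rfun 4 := by
  have hint : MeasureTheory.IntegrableOn (fun t : ℝ => hfun (t - 1)) (Set.Ioi 3) :=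
    hfun_integrableOn le_rfl
  have hunion : Set.Ioc (3:ℝ) 4 ∪ Set.Ioi (4:ℝ) = Set.Ioi 3 :=
    Set.Ioc_union_Ioi_eq_Ioi (by norm_num)
  have hsplit : Hfun 3 = (∫ t in Set.Ioc (3:ℝ) 4, hfun (t - 1)) +
      ∫ t in Set.Ioi (4:ℝ), hfun (t - 1) := by
    rw [Hfun, ← hunion, MeasureTheory.setIntegral_union (Set.Ioc_disjoint_Ioi le_rfl)
      measurableSet_Ioi (hint.mono_set (hunion ▸ Set.subset_union_left))
      (hint.mono_set (hunion ▸ Set.subset_union_right))]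
  rw [hsplit]
  have h1 : (∫ t in Set.Ioc (3:ℝ) 4, hfun (t - 1)) ≤ Real.exp (-2) - Real.exp (-3) := by
    rw [← integral_exp_Ioc]
    apply MeasureTheory.setIntegral_mono_on
      (hint.mono_set (hunion ▸ Set.subset_union_left))
      ((exp_one_sub_integrableOn 3).mono_set Set.Ioc_subset_Ioi_self)
      measurableSet_Ioc
    intro t ht
    exact hfun_le (le_of_lt ht.1)
  have h2 : (∫ t in Set.Ioi (4:ℝ), hfun (t - 1)) ≤ Real.exp (-3) * Rfun 4 := by
    rw [← integral_g]
    apply MeasureTheory.setIntegral_mono_on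
      (hint.mono_set (hunion ▸ Set.subset_union_right)) g_integrableOn measurableSet_Ioi
    intro t ht
    exact hfun_le' ht
  linarith

lemma final_numeric : Real.exp (-2) - Real.exp (-3) + Real.exp (-3) * Rfun 4 ≤
    0.9214 * Real.exp (-2) := by
  have hR4 : Rfun 4 = (951510397 : ℝ)/1210104000 := by unfold Rfun; norm_num
  have h1 : Real.exp (-2 : ℝ) = Real.exp (-3) * Real.exp 1 := by
    rw [← Real.exp_add]; norm_num
  have h3 := Real.exp_one_lt_d9
  have h4 := Real.exp_pos (-3:ℝ)
  rw [hR4, h1]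
  nlinarith

lemma rhs_lower {s : ℝ} (h1 : 1 ≤ s) (h3 : s ≤ 3) : Real.exp (-2) ≤ s * hfun s := by
  unfold hfun
  split_ifs with hs2 hs3
  · nlinarith [Real.exp_pos (-2:ℝ)]
  · push_neg at hs2
    -- need exp (-2) ≤ s * exp (-s), i.e. exp (s-2) ≤ s
    have hA : 4 - s ≤ Real.exp (3 - s) := by
      have := Real.add_one_le_exp (3 - s)
      linarith
    have hmul : Real.exp (s - 2) * Real.exp (3 - s) = Real.exp 1 := by
      rw [← Real.exp_add]; ring_nf
    have hs4 : (0:ℝ) < 4 - s := by linarith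
    have hkey : Real.exp (s - 2) ≤ s := by
      have hE : Real.exp 1 ≤ s * (4 - s) := by
        nlinarith [Real.exp_one_lt_d9]
      nlinarith [Real.exp_pos (s - 2), Real.exp_pos (3 - s)]
    have h2 : Real.exp (-2 : ℝ) = Real.exp (-s) * Real.exp (s - 2) := by
      rw [← Real.exp_add]; ring_nf
    rw [h2]
    nlinarith [Real.exp_pos (-s)]

/-- Theorem 2.6: with `κ = 0.9214`, `H(s) ≤ κ s h(s)` for `s ≥ 3` and
`H(3) ≤ κ s h(s)` for `1 ≤ s ≤ 3`. -/
theorem Hfun_kappa_bound :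
    (∀ s : ℝ, 3 ≤ s → Hfun s ≤ 0.9214 * s * hfun s) ∧
    (∀ s : ℝ, 1 ≤ s → s ≤ 3 → Hfun 3 ≤ 0.9214 * s * hfun s) := by
  constructor
  · intro s hs
    have hH := Hfun_le hs
    have hexp : Real.exp (1 - s) = Real.exp 1 * Real.exp (-s) := by
      rw [← Real.exp_add]; ring_nf
    have hE := Real.exp_one_lt_d9
    have hpos := Real.exp_pos (-s)
    unfold hfun
    rw [if_neg (by linarith)]
    by_cases h3 : s ≤ 3
    · rw [if_pos h3]
      have : s = 3 := le_antisymm h3 hs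
      subst this
      nlinarith
    · rw [if_neg h3]
      push_neg at h3
      have hs0 : s ≠ 0 := by positivity
      have : 0.9214 * s * (3 / s * Real.exp (-s)) = 0.9214 * 3 * Real.exp (-s) := by
        field_simp
      rw [this]
      nlinarith
  · intro s h1 h3
    have hH := Hfun3_le
    have hfin := final_numeric
    have hrhs := rhs_lower h1 h3
    have : 0.9214 * Real.exp (-2) ≤ 0.9214 * (s * hfun s) := by
      nlinarith
    calc Hfun 3 ≤ 0.9214 * Real.exp (-2) := le_trans hH hfin
      _ ≤ 0.9214 * (s * hfun s) := this
      _ = 0.9214 * s * hfun s := by ring
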